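/- For any point x ∈ ℝ^d, setting r = H_*^{1/2}(x − x_*), ∇f̂(x) = H_*^{-1/2}∇f(x), and σ = (M/μ^{3/2})‖r‖, one has ‖∇f̂(x) − r‖ ≤ σ‖r‖. -/

import Mathlib

noncomputable section

open Matrix Finset

abbrev E (d : ℕ) := EuclideanSpace ℝ (Fin d)
abbrev Mat (d : ℕ) := Matrix (Fin d) (Fin d) ℝ

/-- Spectral (operator 2-) norm of a real matrix. -/
def spec {d : ℕ} (A : Mat d) : ℝ := ‖Matrix.toEuclideanCLM (𝕜 := ℝ) A‖

/-- Frobenius norm of a real matrix. -/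
def frob {d : ℕ} (A : Mat d) : ℝ := Real.sqrt (∑ i, ∑ j, (A i j) ^ 2)

/-- A matrix acting on a Euclidean vector. -/
def mApp {d : ℕ} (A : Mat d) (v : E d) : E d := Matrix.toEuclideanCLM (𝕜 := ℝ) A v

/-- Outer product `u vᵀ`. -/
def outer {d : ℕ} (u v : E d) : Mat d := Matrix.of fun i j => u i * v j

/-- Euclidean dot product. -/
def dot {d : ℕ} (u v : E d) : ℝ := ∑ i, u i * v i

/-- `σ(x) = (M/μ^{3/2})·‖H_*^{1/2}(x − x_*)‖`. -/
def sig {d : ℕ} (M μ : ℝ) (sqH : Mat d) (xs x : E d) : ℝ :=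
  M / μ ^ ((3:ℝ)/2) * ‖mApp sqH (x - xs)‖

lemma mApp_apply {d : ℕ} (A : Mat d) (v : E d) (i : Fin d) :
    mApp A v i = ∑ j, A i j * v j := by
  simp [mApp, Matrix.ofLp_toEuclideanCLM]; rfl

lemma mApp_mul {d : ℕ} (A B : Mat d) (v : E d) : mApp (A * B) v = mApp A (mApp B v) := by
  simp [mApp, _root_.map_mul]

lemma mApp_sub {d : ℕ} (A B : Mat d) (v : E d) : mApp (A - B) v = mApp A v - mApp B v := by
  simp [mApp, map_sub]

lemma mApp_vsub {d : ℕ} (A : Mat d) (u v : E d) : mApp A (u - v) = mApp A u - mApp A v := by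
  simp [mApp, map_sub]

lemma mApp_one {d : ℕ} (v : E d) : mApp (1 : Mat d) v = v := by
  simp [mApp, _root_.map_one]

lemma mApp_norm_le {d : ℕ} (A : Mat d) (v : E d) : ‖mApp A v‖ ≤ spec A * ‖v‖ :=
  (Matrix.toEuclideanCLM (𝕜 := ℝ) A).le_opNorm v

lemma dot_mApp_symm {d : ℕ} (A : Mat d) (hA : A.IsSymm) (u v : E d) :
    dot u (mApp A v) = dot (mApp A u) v := by
  simp only [dot, mApp_apply, Finset.mul_sum, Finset.sum_mul]
  rw [Finset.sum_comm]
  apply Finset.sum_congr rfl; intro i _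
  apply Finset.sum_congr rfl; intro j _
  have h : A j i = A i j := ((congrFun (congrFun hA.symm i) j).trans rfl).symm
  rw [h]; ring

lemma dot_comm {d : ℕ} (u v : E d) : dot u v = dot v u := by
  simp [dot, mul_comm]

lemma norm_sq_eq_dot {d : ℕ} (v : E d) : ‖v‖ ^ 2 = dot v v := by
  rw [EuclideanSpace.norm_sq_eq]
  simp [dot, sq]

theorem weighted_gradient_residual_bound
    {d : ℕ}
    (f : E d → ℝ) (g : E d → E d) (Hess : E d → Mat d) (xs : E d)
    (μ L M : ℝ) (hμ : 0 < μ) (hμL : μ ≤ L) (hM : 0 < M)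
    -- `g` is the gradient of `f`, and `Hess` its Hessian (so `f` is twice differentiable)
    (hg : ∀ x, HasGradientAt f (g x) x)
    (hHd : ∀ x, HasFDerivAt g (Matrix.toEuclideanCLM (𝕜 := ℝ) (Hess x)) x)
    -- `xs` is the unique minimizer of `f`
    (hmin : ∀ x, f xs ≤ f x)
    (huniq : ∀ x, (∀ y, f x ≤ f y) → x = xs)
    -- Assumption 1: strong convexity and gradient Lipschitz continuity
    (hgl : ∀ x y, μ * ‖x - y‖ ≤ ‖g x - g y‖)
    (hgu : ∀ x y, ‖g x - g y‖ ≤ L * ‖x - y‖)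
    (hHl : ∀ x v, μ * ‖v‖ ^ 2 ≤ dot v (mApp (Hess x) v))
    (hHu : ∀ x v, dot v (mApp (Hess x) v) ≤ L * ‖v‖ ^ 2)
    -- Assumption 2: Hessian Lipschitz continuity toward the optimum
    (hLip : ∀ x, spec (Hess x - Hess xs) ≤ M * ‖x - xs‖)
    -- `sqH` is the positive definite square root `H_*^{1/2}` of `H_* = ∇²f(x_*)`
    (sqH : Mat d) (hsqH : sqH.PosDef) (hsqH2 : sqH * sqH = Hess xs)
    (x : E d) :
    ‖mApp sqH⁻¹ (g x) - mApp sqH (x - xs)‖ ≤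
      sig M μ sqH xs x * ‖mApp sqH (x - xs)‖ := by
  have hs : (0:ℝ) < Real.sqrt μ := Real.sqrt_pos.2 hμ
  have hsymm : sqH.IsSymm := by
    have := hsqH.1
    rwa [Matrix.IsHermitian, conjTranspose_eq_transpose_of_trivial] at this
  -- key lower bound for sqH
  have key : ∀ v : E d, Real.sqrt μ * ‖v‖ ≤ ‖mApp sqH v‖ := by
    intro v
    have h1 : ‖mApp sqH v‖ ^ 2 = dot v (mApp (Hess xs) v) := by
      rw [norm_sq_eq_dot, ← hsqH2, mApp_mul, dot_mApp_symm sqH hsymm, dot_comm]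
    have h2 : (Real.sqrt μ * ‖v‖) ^ 2 ≤ ‖mApp sqH v‖ ^ 2 := by
      rw [mul_pow, Real.sq_sqrt hμ.le, h1]; exact hHl xs v
    have h3 := Real.sqrt_le_sqrt h2
    rwa [Real.sqrt_sq (by positivity), Real.sqrt_sq (norm_nonneg _)] at h3
  have hdet : IsUnit sqH.det := isUnit_iff_ne_zero.2 (ne_of_gt hsqH.det_pos)
  -- inverse upper bound
  have invb : ∀ w : E d, Real.sqrt μ * ‖mApp sqH⁻¹ w‖ ≤ ‖w‖ := by
    intro w
    have h := key (mApp sqH⁻¹ w)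
    rwa [← mApp_mul, Matrix.mul_nonsing_inv sqH hdet, mApp_one] at h
  -- gradient vanishes at the minimizer
  have gxs : g xs = 0 := by
    have hloc : IsLocalMin f xs := Filter.Eventually.of_forall hmin
    have hz := hloc.hasFDerivAt_eq_zero (hg xs).hasFDerivAt
    have := congrArg (InnerProductSpace.toDual ℝ (E d)).symm hz
    simpa using this
  set dv : E d := x - xs with hdv
  -- mean value estimate
  have mvt : ‖g x - mApp (Hess xs) dv‖ ≤ M * ‖dv‖ ^ 2 := by
    set φ : ℝ → E d := fun t => g (xs + t • dv) - t • mApp (Hess xs) dv with hφdef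
    have hφ : ∀ t : ℝ, HasDerivAt φ
        (mApp (Hess (xs + t • dv) - Hess xs) dv) t := by
      intro t
      have hline : HasDerivAt (fun t : ℝ => xs + t • dv) dv t := by
        simpa using ((hasDerivAt_id t).smul_const dv).const_add xs
      have h1 : HasDerivAt (fun t : ℝ => g (xs + t • dv))
          (mApp (Hess (xs + t • dv)) dv) t :=
        (hHd (xs + t • dv)).comp_hasDerivAt t hline
      have h2 : HasDerivAt (fun t : ℝ => t • mApp (Hess xs) dv)
          (mApp (Hess xs) dv) t := by
        simpa using (hasDerivAt_id t).smul_const (mApp (Hess xs) dv)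
      rw [mApp_sub]
      exact h1.sub h2
    have bound : ∀ t ∈ Set.Ico (0:ℝ) 1,
        ‖mApp (Hess (xs + t • dv) - Hess xs) dv‖ ≤ M * ‖dv‖ ^ 2 := by
      intro t ht
      have h1 := mApp_norm_le (Hess (xs + t • dv) - Hess xs) dv
      have h2 := hLip (xs + t • dv)
      have h3 : ‖xs + t • dv - xs‖ = t * ‖dv‖ := by
        simp [norm_smul, abs_of_nonneg ht.1]
      rw [h3] at h2
      have h4 : spec (Hess (xs + t • dv) - Hess xs) ≤ M * ‖dv‖ := by
        refine h2.trans ?_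
        have : M * (t * ‖dv‖) ≤ M * (1 * ‖dv‖) := by
          apply mul_le_mul_of_nonneg_left _ hM.le
          exact mul_le_mul_of_nonneg_right ht.2.le (norm_nonneg _)
        simpa using this
      calc ‖mApp (Hess (xs + t • dv) - Hess xs) dv‖
          ≤ spec (Hess (xs + t • dv) - Hess xs) * ‖dv‖ := h1
        _ ≤ M * ‖dv‖ * ‖dv‖ := mul_le_mul_of_nonneg_right h4 (norm_nonneg _)
        _ = M * ‖dv‖ ^ 2 := by ring
    have := norm_image_sub_le_of_norm_deriv_le_segment_01'
      (fun t _ => (hφ t).hasDerivWithinAt) bound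
    have hφ1 : φ 1 = g x - mApp (Hess xs) dv := by
      simp [hφdef, hdv]
    have hφ0 : φ 0 = 0 := by simp [hφdef, gxs]
    rwa [hφ1, hφ0, sub_zero] at this
  -- rewrite the goal
  have hrw : mApp sqH dv = mApp sqH⁻¹ (mApp (Hess xs) dv) := by
    rw [← mApp_mul, ← hsqH2, ← Matrix.mul_assoc, Matrix.nonsing_inv_mul sqH hdet,
      Matrix.one_mul]
  have hLHS : mApp sqH⁻¹ (g x) - mApp sqH dv
      = mApp sqH⁻¹ (g x - mApp (Hess xs) dv) := by
    rw [hrw]; exact (mApp_vsub _ _ _).symm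
  rw [hLHS]
  -- put the pieces together
  have step1 : Real.sqrt μ * ‖mApp sqH⁻¹ (g x - mApp (Hess xs) dv)‖ ≤ M * ‖dv‖ ^ 2 :=
    (invb _).trans mvt
  have hdr : Real.sqrt μ * ‖dv‖ ≤ ‖mApp sqH dv‖ := key dv
  have hpow : μ ^ ((3:ℝ)/2) = μ * Real.sqrt μ := by
    rw [Real.sqrt_eq_rpow, show ((3:ℝ)/2) = 1 + 1/2 by norm_num,
      Real.rpow_add hμ, Real.rpow_one]
  rw [sig, hpow, ← hdv]
  set r := ‖mApp sqH dv‖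
  set a := ‖dv‖
  set s := Real.sqrt μ
  set N := ‖mApp sqH⁻¹ (g x - mApp (Hess xs) dv)‖
  have hr0 : 0 ≤ r := norm_nonneg _
  have ha0 : 0 ≤ a := norm_nonneg _
  have hN0 : 0 ≤ N := norm_nonneg _
  have hs2 : s ^ 2 = μ := Real.sq_sqrt hμ.le
  rw [div_mul_eq_mul_div, div_mul_eq_mul_div, le_div_iff₀ (by positivity)]
  -- goal : N * (μ * s) ≤ M * r * r
  have h1 : μ * a ^ 2 ≤ r ^ 2 := by
    have h := mul_self_le_mul_self (mul_nonneg hs.le ha0) hdr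
    calc μ * a ^ 2 = (s * a) * (s * a) := by rw [← hs2]; ring
      _ ≤ r * r := h
      _ = r ^ 2 := by ring
  calc N * (μ * s) = μ * (s * N) := by ring
    _ ≤ μ * (M * a ^ 2) := mul_le_mul_of_nonneg_left step1 hμ.le
    _ = M * (μ * a ^ 2) := by ring
    _ ≤ M * r ^ 2 := mul_le_mul_of_nonneg_left h1 hM.le
    _ = M * r * r := by ring
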